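/- For every hypergraph H = (V, E) of rank r and every positive integer k, there exists a subset E' ⊆ E that contains every k-weak edge of H (every edge e with γ_H(e) < k) and is 4rk-light, i.e., |E'| ≤ 4rk·(κ(H − E') − κ(H)). -/

import Mathlib

/- A hypergraph on a finite vertex type `V` is given by a multiset `E` of edges,
each edge a `Finset V` (with at least 2 vertices, stated as a hypothesis). -/

variable {V : Type*} [Fintype V] [DecidableEq V]

/-- `δ_H(A)`: the (multiset of) edges of `E` crossing the cut `A`. -/
def cutEdges (E : Multiset (Finset V)) (A : Finset V) : Multiset (Finset V) :=
  E.filter (fun e => (e ∩ A).Nonempty ∧ (e \ A).Nonempty)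

/-- Edge multiset of the subhypergraph `H[U]` induced on `U`. -/
def induced (E : Multiset (Finset V)) (U : Finset V) : Multiset (Finset V) :=
  E.filter (fun e => e ⊆ U)

/-- Edge-connectivity `λ(H[U])`: the minimum number of edges of `H[U]` crossing a
nonempty proper subset `A ⊊ U`. -/
noncomputable def lam (E : Multiset (Finset V)) (U : Finset V) : ℕ :=
  sInf {k : ℕ | ∃ A : Finset V, A ⊆ U ∧ A.Nonempty ∧ A ≠ U ∧
    k = Multiset.card (cutEdges (induced E U) A)}

/-- Strength `γ_H(e)`: the maximum of `λ(H[U])` over all `U` with `e ⊆ U ⊆ V`. -/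
noncomputable def strength (E : Multiset (Finset V)) (e : Finset V) : ℕ :=
  (Finset.univ.powerset.filter (fun U => e ⊆ U)).sup (lam E)

/-- The graph on `V` joining two distinct vertices that lie in a common edge of `E`;
its connectivity notions are those of the hypergraph. -/
def toGraph (E : Multiset (Finset V)) : SimpleGraph V where
  Adj u v := u ≠ v ∧ ∃ e ∈ E, u ∈ e ∧ v ∈ e
  symm := ⟨by rintro u v ⟨h, e, he, hu, hv⟩; exact ⟨h.symm, e, he, hv, hu⟩⟩
  loopless := ⟨by rintro v ⟨h, -⟩; exact h rfl⟩

/-- `κ(H)`: the number of connected components of the hypergraph. -/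
noncomputable def kappa (E : Multiset (Finset V)) : ℕ :=
  Nat.card (toGraph E).ConnectedComponent

/-- The vertex map contracting the edge `e'` to its representative vertex `v0 ∈ e'`. -/
def contractMap (e' : Finset V) (v0 : V) : V → V := fun u => if u ∈ e' then v0 else u

/-- The hypergraph `H/e'` obtained by contracting the edge `e'` (to the representative
vertex `v0 ∈ e'`): edges contained in `e'` are removed, all other edges are replaced by
their image under the contraction. -/
def contract (E : Multiset (Finset V)) (e' : Finset V) (v0 : V) : Multiset (Finset V) :=
  (E.filter (fun f => ¬ f ⊆ e')).map (fun f => f.image (contractMap e' v0))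

/-- The degree of a vertex: the number of edges (with multiplicity) containing it. -/
def degree (E : Multiset (Finset V)) (v : V) : ℕ :=
  Multiset.card (E.filter (fun e => v ∈ e))

set_option linter.unusedSectionVars false

private lemma lam_mono' {E' E : Multiset (Finset V)} (h : E' ≤ E) (U : Finset V) :
    lam E' U ≤ lam E U := by
  classical
  by_cases hS : ∃ A : Finset V, A ⊆ U ∧ A.Nonempty ∧ A ≠ U
  · have hne : {k : ℕ | ∃ A : Finset V, A ⊆ U ∧ A.Nonempty ∧ A ≠ U ∧
        k = Multiset.card (cutEdges (induced E U) A)}.Nonempty := by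
      obtain ⟨A, h1, h2, h3⟩ := hS
      exact ⟨_, A, h1, h2, h3, rfl⟩
    obtain ⟨A, h1, h2, h3, h4⟩ := Nat.sInf_mem hne
    calc lam E' U ≤ Multiset.card (cutEdges (induced E' U) A) :=
          Nat.sInf_le ⟨A, h1, h2, h3, rfl⟩
      _ ≤ Multiset.card (cutEdges (induced E U) A) :=
          Multiset.card_le_card
            (Multiset.filter_le_filter _ (Multiset.filter_le_filter _ h))
      _ = lam E U := h4.symm
  · have hempty : ∀ F : Multiset (Finset V), lam F U = 0 := by
      intro F
      rw [lam, Nat.sInf_eq_zero]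
      right
      ext m
      simp only [Set.mem_setOf_eq, Set.mem_empty_iff_false, iff_false]
      rintro ⟨A, hA1, hA2, hA3, -⟩
      exact hS ⟨A, hA1, hA2, hA3⟩
    rw [hempty E', hempty E]

private lemma strength_mono' {E' E : Multiset (Finset V)} (h : E' ≤ E) (e : Finset V) :
    strength E' e ≤ strength E e :=
  Finset.sup_mono_fun (fun U _ => lam_mono' h U)

private lemma lam_le_strength' {E : Multiset (Finset V)} {e U : Finset V} (he : e ⊆ U) :
    lam E U ≤ strength E e :=
  Finset.le_sup (Finset.mem_filter.mpr
    ⟨Finset.mem_powerset.mpr (Finset.subset_univ U), he⟩)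

private lemma toGraph_mono' {E' E : Multiset (Finset V)} (h : E' ≤ E) :
    toGraph E' ≤ toGraph E := by
  rintro u v ⟨hne, e, he, hu, hv⟩
  exact ⟨hne, e, Multiset.mem_of_le h he, hu, hv⟩

private lemma kappa_map_surj {E' E : Multiset (Finset V)} (h : E' ≤ E) :
    Function.Surjective
      (SimpleGraph.ConnectedComponent.map
        (SimpleGraph.Hom.ofLE (toGraph_mono' h))) := by
  intro c
  obtain ⟨v, rfl⟩ := c.exists_rep
  exact ⟨(toGraph E').connectedComponentMk v, rfl⟩

private lemma kappa_le' {E' E : Multiset (Finset V)} (h : E' ≤ E) :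
    kappa E ≤ kappa E' := by
  have hfin : Finite ((toGraph E').ConnectedComponent) := Quot.finite _
  exact Nat.card_le_card_of_surjective _ (kappa_map_surj h)

private lemma kappa_lt' {E' E : Multiset (Finset V)} (h : E' ≤ E) {a b : V}
    (hab : (toGraph E).Reachable a b) (hnab : ¬ (toGraph E').Reachable a b) :
    kappa E < kappa E' := by
  have hfin' : Finite ((toGraph E').ConnectedComponent) := Quot.finite _
  have hfin : Finite ((toGraph E).ConnectedComponent) := Quot.finite _
  letI := Fintype.ofFinite ((toGraph E').ConnectedComponent)
  letI := Fintype.ofFinite ((toGraph E).ConnectedComponent)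
  rw [kappa, kappa, Nat.card_eq_fintype_card, Nat.card_eq_fintype_card]
  apply Fintype.card_lt_of_surjective_not_injective _ (kappa_map_surj h)
  intro hinj
  apply hnab
  have heq : (toGraph E').connectedComponentMk a = (toGraph E').connectedComponentMk b := by
    apply hinj
    simp only [SimpleGraph.ConnectedComponent.map_mk]
    exact SimpleGraph.ConnectedComponent.sound hab
  exact (SimpleGraph.ConnectedComponent.eq).mp heq

private lemma walk_cross {G : SimpleGraph V} {A : Finset V} :
    ∀ {u v : V}, G.Walk u v → u ∈ A → v ∉ A →
      ∃ x y, G.Adj x y ∧ x ∈ A ∧ y ∉ A := by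
  intro u v w
  induction w with
  | nil => intro h1 h2; exact absurd h1 h2
  | @cons u' m v' h p ih =>
    intro h1 h2
    by_cases hm : m ∈ A
    · exact ih hm h2
    · exact ⟨u', m, h, h1, hm⟩

private lemma mem_sub_cutEdges {F : Multiset (Finset V)} {A f : Finset V}
    (hf : f ∈ F - cutEdges F A) :
    ¬ ((f ∩ A).Nonempty ∧ (f \ A).Nonempty) := by
  intro hp
  have hcount := Multiset.count_pos.mpr hf
  rw [Multiset.count_sub] at hcount
  rw [cutEdges, Multiset.count_filter, if_pos hp] at hcount
  omega

private lemma aux_main (n : ℕ) : ∀ F : Multiset (Finset V), Multiset.card F ≤ n →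
    (∀ e ∈ F, 2 ≤ e.card) → ∀ k : ℕ, 0 < k →
    ∃ E' : Multiset (Finset V), E' ≤ F ∧
      (∀ e ∈ F, strength F e < k → F.count e ≤ E'.count e) ∧
      Multiset.card E' ≤ k * (kappa (F - E') - kappa F) := by
  classical
  induction n with
  | zero =>
    intro F hF _ k hk
    refine ⟨0, Multiset.zero_le _, ?_, by simp⟩
    intro e he _
    rw [Multiset.card_eq_zero.mp (Nat.le_zero.mp hF)] at he
    exact absurd he (Multiset.notMem_zero e)
  | succ n ih =>
    intro F hcard hE2 k hk
    by_cases hw : ∃ e ∈ F, strength F e < k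
    · obtain ⟨e, heF, hse⟩ := hw
      have h2 := hE2 e heF
      obtain ⟨v0, hv0⟩ : e.Nonempty := Finset.card_pos.mp (by omega)
      set U : Finset V := Finset.univ.filter (fun u => (toGraph F).Reachable v0 u) with hU
      have hmemU : ∀ u : V, u ∈ U ↔ (toGraph F).Reachable v0 u := by
        intro u; simp [hU]
      have heU : e ⊆ U := by
        intro u hu
        rw [hmemU]
        by_cases huv : u = v0
        · subst huv; exact SimpleGraph.Reachable.refl _
        · exact SimpleGraph.Adj.reachable ⟨fun h => huv h.symm, e, heF, hv0, hu⟩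
      have hmeet : ∀ f ∈ F, ∀ x ∈ f, x ∈ U → f ⊆ U := by
        intro f hf x hx hxU y hy
        rw [hmemU] at hxU ⊢
        by_cases hyx : y = x
        · subst hyx; exact hxU
        · exact hxU.trans (SimpleGraph.Adj.reachable ⟨fun h => hyx h.symm, f, hf, hx, hy⟩)
      have hlamU : lam F U < k := lt_of_le_of_lt (lam_le_strength' heU) hse
      -- the minimizing cut A
      have hSne : {m : ℕ | ∃ A : Finset V, A ⊆ U ∧ A.Nonempty ∧ A ≠ U ∧
          m = Multiset.card (cutEdges (induced F U) A)}.Nonempty := by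
        refine ⟨_, {v0}, ?_, ⟨v0, Finset.mem_singleton_self v0⟩, ?_, rfl⟩
        · intro x hx
          rw [Finset.mem_singleton] at hx
          subst hx; exact heU hv0
        · intro hcontra
          have : U.card = 1 := by rw [← hcontra]; simp
          have : 2 ≤ U.card := le_trans h2 (Finset.card_le_card heU)
          omega
      obtain ⟨A, hAU, hAne, hAneU, hAcard⟩ := Nat.sInf_mem hSne
      -- crossing edges are global crossing edges
      have hcross_sub : ∀ f ∈ F, ((f ∩ A).Nonempty ∧ (f \ A).Nonempty) → f ⊆ U := by
        rintro f hf ⟨⟨x, hx⟩, -⟩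
        rw [Finset.mem_inter] at hx
        exact hmeet f hf x hx.1 (hAU hx.2)
      have hcutEq : cutEdges F A = cutEdges (induced F U) A := by
        rw [cutEdges, cutEdges, induced, Multiset.filter_filter]
        apply Multiset.filter_congr
        intro f hf
        constructor
        · intro hp; exact ⟨hp, hcross_sub f hf hp⟩
        · intro hp; exact hp.1
      have hDle : cutEdges F A ≤ F := Multiset.filter_le _ _
      have hDcard : Multiset.card (cutEdges F A) < k := by
        rw [hcutEq, ← hAcard]
        exact hlamU
      obtain ⟨b, hbU, hbA⟩ : ∃ b ∈ U, b ∉ A := by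
        by_contra hcon
        push_neg at hcon
        exact hAneU (Finset.Subset.antisymm hAU hcon)
      obtain ⟨a, haA⟩ := hAne
      have haU : a ∈ U := hAU haA
      have hreach_ab : (toGraph F).Reachable a b :=
        ((hmemU a).mp haU).symm.trans ((hmemU b).mp hbU)
      have hDne : cutEdges F A ≠ 0 := by
        obtain ⟨w⟩ := hreach_ab
        obtain ⟨x, y, hxy, hxA, hyA⟩ := walk_cross w haA hbA
        obtain ⟨hne, f, hfF, hxf, hyf⟩ := hxy
        have hfD : f ∈ cutEdges F A := by
          rw [cutEdges, Multiset.mem_filter]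
          exact ⟨hfF, ⟨x, Finset.mem_inter.mpr ⟨hxf, hxA⟩⟩,
            ⟨y, Finset.mem_sdiff.mpr ⟨hyf, hyA⟩⟩⟩
        exact fun h0 => by simp [h0] at hfD
      have hnreach : ¬ (toGraph (F - cutEdges F A)).Reachable a b := by
        rintro ⟨w⟩
        obtain ⟨x, y, hxy, hxA, hyA⟩ := walk_cross w haA hbA
        obtain ⟨hne, f, hfF, hxf, hyf⟩ := hxy
        exact mem_sub_cutEdges hfF ⟨⟨x, Finset.mem_inter.mpr ⟨hxf, hxA⟩⟩,
          ⟨y, Finset.mem_sdiff.mpr ⟨hyf, hyA⟩⟩⟩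
      have hcard' : Multiset.card (F - cutEdges F A) ≤ n := by
        rw [Multiset.card_sub hDle]
        have h1 : 0 < Multiset.card (cutEdges F A) := Multiset.card_pos.mpr hDne
        omega
      obtain ⟨E'', hle'', hweak'', hcard''⟩ := ih (F - cutEdges F A) hcard'
        (fun f hf => hE2 f (Multiset.mem_of_le (tsub_le_self) hf)) k hk
      refine ⟨cutEdges F A + E'', ?_, ?_, ?_⟩
      · calc cutEdges F A + E'' ≤ cutEdges F A + (F - cutEdges F A) :=
              add_le_add_right hle'' _
          _ = F := add_tsub_cancel_of_le hDle
      · intro f hf hsf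
        have hsplit : F.count f = (cutEdges F A).count f + (F - cutEdges F A).count f := by
          rw [Multiset.count_sub]
          have := Multiset.count_le_of_le f hDle
          omega
        rw [Multiset.count_add]
        by_cases hmem : f ∈ F - cutEdges F A
        · have := hweak'' f hmem (lt_of_le_of_lt (strength_mono' (tsub_le_self) f) hsf)
          omega
        · have : (F - cutEdges F A).count f = 0 := Multiset.count_eq_zero.mpr hmem
          omega
      · have hEq : F - (cutEdges F A + E'') = F - cutEdges F A - E'' :=
          tsub_add_eq_tsub_tsub F (cutEdges F A) E''
        rw [hEq, Multiset.card_add]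
        have hab : kappa F < kappa (F - cutEdges F A) :=
          kappa_lt' (tsub_le_self) hreach_ab hnreach
        have hbc : kappa (F - cutEdges F A) ≤ kappa (F - cutEdges F A - E'') :=
          kappa_le' (tsub_le_self)
        have hsplit : kappa (F - cutEdges F A - E'') - kappa F =
            (kappa (F - cutEdges F A - E'') - kappa (F - cutEdges F A)) +
            (kappa (F - cutEdges F A) - kappa F) := by omega
        rw [hsplit, Nat.mul_add]
        have hk2 : k ≤ k * (kappa (F - cutEdges F A) - kappa F) :=
          Nat.le_mul_of_pos_right k (by omega)
        linarith
    · refine ⟨0, Multiset.zero_le _, ?_, by simp⟩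
      intro e he hs
      exact absurd ⟨e, he, hs⟩ hw

/-- every rank-`r` hypergraph has a `4rk`-light set `E' ⊆ E` containing
(all copies of) every `k`-weak edge: `|E'| ≤ 4rk·(κ(H − E') − κ(H))`. -/
theorem light_weak_edge_set_exists (E : Multiset (Finset V))
    (hE : ∀ e ∈ E, 2 ≤ e.card) (r : ℕ) (hr : ∀ e ∈ E, e.card ≤ r)
    (k : ℕ) (hk : 0 < k) :
    ∃ E' : Multiset (Finset V), E' ≤ E ∧
      (∀ e : Finset V, e ∈ E → strength E e < k → E.count e ≤ E'.count e) ∧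
      Multiset.card E' ≤ 4 * r * k * (kappa (E - E') - kappa E) := by
  classical
  obtain ⟨E', hle, hweak, hcard⟩ := aux_main (Multiset.card E) E le_rfl hE k hk
  refine ⟨E', hle, hweak, ?_⟩
  by_cases hE0 : E = 0
  · have hE'0 : E' = 0 := Multiset.le_zero.mp (hE0 ▸ hle)
    simp [hE'0]
  · obtain ⟨e0, he0⟩ := Multiset.exists_mem_of_ne_zero hE0
    have hr1 : 0 < r := lt_of_lt_of_le (by have := hE e0 he0; omega) (hr e0 he0)
    calc Multiset.card E' ≤ k * (kappa (E - E') - kappa E) := hcard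
      _ ≤ 4 * r * k * (kappa (E - E') - kappa E) :=
          Nat.mul_le_mul_right _ (by nlinarith)
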